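/- Let w ∈ A^ℕ be a sequence over a finite alphabet with uniform word frequencies, and let X_w be the closure of the shift orbit of w. Then the topological dynamical system (X_w, Σ) is uniquely ergodic. -/

import Mathlib

open MeasureTheory Finset
set_option linter.unusedSectionVars false
set_option maxHeartbeats 1000000

/-- The word `v` occurs in the sequence `w` at position `k`. -/
def occursAtG {A : Type*} (w : ℕ → A) (v : List A) (k : ℕ) : Prop :=
  ∀ i < v.length, v.getD i (w 0) = w (k + i)

/-- The number of occurrences of the word `v` in the window `w_k ⋯ w_{k+ℓ-1}`. -/
noncomputable def countOcc {A : Type*} (w : ℕ → A) (v : List A) (k ℓ : ℕ) : ℕ :=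
  Set.ncard {j : ℕ | j + v.length ≤ ℓ ∧ occursAtG w v (k + j)}

/-- `w` has uniform word frequencies: for every finite word `v` the frequency of `v`
in windows of length `ℓ` converges as `ℓ → ∞`, uniformly in the starting position. -/
def UniformWordFrequencies {A : Type*} (w : ℕ → A) : Prop :=
  ∀ v : List A, ∃ f : ℝ, ∀ ε > (0 : ℝ), ∃ L : ℕ, ∀ ℓ ≥ L, ∀ k : ℕ,
    |(countOcc w v k ℓ : ℝ) / ℓ - f| < ε

/-- The shift on `A^ℕ`. -/
def shiftMap {A : Type*} : (ℕ → A) → (ℕ → A) := fun u n => u (n + 1)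

section Comb

variable {A : Type*} (w : ℕ → A)

open Classical in
lemma countOcc_card (v : List A) (k ℓ : ℕ) :
    countOcc w v k ℓ
      = ((Finset.range (ℓ + 1 - v.length)).filter fun j => occursAtG w v (k + j)).card := by
  classical
  rw [countOcc, ← Set.ncard_coe_finset]
  congr 1
  ext j
  simp only [Finset.coe_filter, Finset.mem_range, Set.mem_setOf_eq]
  constructor
  · rintro ⟨h1, h2⟩; exact ⟨by omega, h2⟩
  · rintro ⟨h1, h2⟩; exact ⟨by omega, h2⟩

lemma occursAtG_append_singleton (v : List A) (a : A) (p : ℕ) :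
    occursAtG w (v ++ [a]) p ↔ occursAtG w v p ∧ w (p + v.length) = a := by
  constructor
  · intro h
    refine ⟨fun i hi => ?_, ?_⟩
    · have := h i (by simp; omega)
      rwa [List.getD_append _ _ _ _ hi] at this
    · have := h v.length (by simp)
      rw [List.getD_eq_getElem _ _ (by simp)] at this
      simp at this
      exact this.symm
  · rintro ⟨h1, h2⟩ i hi
    simp at hi
    rcases Nat.lt_or_ge i v.length with h | h
    · rw [List.getD_append _ _ _ _ h]; exact h1 i h
    · have : i = v.length := by omega
      subst this
      rw [List.getD_eq_getElem _ _ (by simp)]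
      simp [h2.symm]

lemma occursAtG_cons (v : List A) (a : A) (p : ℕ) :
    occursAtG w (a :: v) p ↔ w p = a ∧ occursAtG w v (p + 1) := by
  constructor
  · intro h
    refine ⟨?_, fun i hi => ?_⟩
    · have := h 0 (by simp)
      simpa using this.symm
    · have := h (i + 1) (by simpa using hi)
      simp only [List.getD_cons_succ] at this
      rw [this]; ring_nf
  · rintro ⟨h1, h2⟩ i hi
    match i with
    | 0 => simpa using h1.symm
    | (i+1) =>
      have := h2 i (by simpa using hi)
      simp only [List.getD_cons_succ]
      rw [this]; ring_nf


variable [Fintype A]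

open Classical in
lemma sum_countOcc_append (v : List A) (k ℓ : ℕ) :
    (∑ a : A, countOcc w (v ++ [a]) k ℓ) ≤ countOcc w v k ℓ ∧
      countOcc w v k ℓ ≤ (∑ a : A, countOcc w (v ++ [a]) k ℓ) + 1 := by
  classical
  set n := v.length with hn
  have hsum : (∑ a : A, countOcc w (v ++ [a]) k ℓ)
      = ((Finset.range (ℓ - n)).filter fun j => occursAtG w v (k + j)).card := by
    have h1 : ∀ a : A, countOcc w (v ++ [a]) k ℓ
        = ((Finset.range (ℓ - n)).filter
            fun j => occursAtG w v (k + j) ∧ w (k + j + n) = a).card := by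
      intro a
      rw [countOcc_card]
      have : ℓ + 1 - (v ++ [a]).length = ℓ - n := by rw [List.length_append, List.length_singleton]; omega
      rw [this]
      congr 1
      ext j
      simp only [Finset.mem_filter, occursAtG_append_singleton, Nat.add_assoc, ← hn]
    simp only [h1, Finset.card_filter]
    rw [Finset.sum_comm]
    congr 1
    ext j
    rcases Classical.em (occursAtG w v (k + j)) with h | h
    · simp only [h, true_and]
      rw [Finset.sum_ite_eq (Finset.univ : Finset A) (w (k + j + n)) (fun _ => 1)]
      simp [h]
    · simp [h]
  rw [hsum, countOcc_card]
  rcases le_or_gt n ℓ with hnl | hnl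
  · have hM : ℓ + 1 - n = (ℓ - n) + 1 := by omega
    rw [hM]
    constructor
    · exact Finset.card_le_card (Finset.filter_subset_filter _
        (Finset.range_subset_range.2 (by omega)))
    · calc ((Finset.range (ℓ - n + 1)).filter fun j => occursAtG w v (k + j)).card
          ≤ (insert (ℓ - n) ((Finset.range (ℓ - n)).filter
              fun j => occursAtG w v (k + j))).card := by
            apply Finset.card_le_card
            intro j hj
            simp only [Finset.mem_filter, Finset.mem_range] at hj
            rcases Nat.lt_or_ge j (ℓ - n) with h | h
            · exact Finset.mem_insert_of_mem (Finset.mem_filter.2 ⟨Finset.mem_range.2 h, hj.2⟩)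
            · have : j = ℓ - n := by omega
              simp [this]
        _ ≤ _ + 1 := Finset.card_insert_le _ _
  · have h1 : ℓ + 1 - n = 0 := by omega
    have h2 : ℓ - n = 0 := by omega
    simp [← hn, h1, h2]

open Classical in
lemma sum_countOcc_cons (v : List A) (k ℓ : ℕ) :
    (∑ a : A, countOcc w (a :: v) k ℓ) ≤ countOcc w v k ℓ ∧
      countOcc w v k ℓ ≤ (∑ a : A, countOcc w (a :: v) k ℓ) + 1 := by
  classical
  set n := v.length with hn
  have hsum : (∑ a : A, countOcc w (a :: v) k ℓ)
      = ((Finset.range (ℓ - n)).filter fun j => occursAtG w v (k + j + 1)).card := by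
    have h1 : ∀ a : A, countOcc w (a :: v) k ℓ
        = ((Finset.range (ℓ - n)).filter
            fun j => w (k + j) = a ∧ occursAtG w v (k + j + 1)).card := by
      intro a
      rw [countOcc_card]
      have : ℓ + 1 - (a :: v).length = ℓ - n := by rw [List.length_cons]; omega
      rw [this]
      congr 1
      ext j
      simp only [Finset.mem_filter, occursAtG_cons]
    simp only [h1, Finset.card_filter]
    rw [Finset.sum_comm]
    congr 1
    ext j
    rcases Classical.em (occursAtG w v (k + j + 1)) with h | h
    · simp only [h, and_true]
      rw [Finset.sum_ite_eq (Finset.univ : Finset A) (w (k + j)) (fun _ => 1)]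
      simp
    · simp [h]
  rw [hsum, countOcc_card]
  rcases le_or_gt n ℓ with hnl | hnl
  · have hM : ℓ + 1 - n = (ℓ - n) + 1 := by omega
    rw [hM, Finset.card_filter, Finset.card_filter, Finset.sum_range_succ']
    have : ∀ j, (if occursAtG w v (k + (j + 1)) then 1 else 0)
        = (if occursAtG w v (k + j + 1) then 1 else 0) := by
      intro j; rfl
    simp only [this]
    constructor
    · omega
    · have : (if occursAtG w v (k + 0) then 1 else 0) ≤ 1 := by split <;> omega
      omega
  · have h1 : ℓ + 1 - n = 0 := by omega
    have h2 : ℓ - n = 0 := by omega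
    simp [← hn, h1, h2]

end Comb

lemma eq_of_abs_sub_le' {a b : ℝ} (h : ∀ ε > (0:ℝ), |a - b| ≤ ε) : a = b := by
  by_contra hne
  have h1 : 0 < |a - b| := abs_pos.2 (sub_ne_zero.2 hne)
  have := h (|a - b| / 2) (by linarith)
  linarith

section Freq

variable {A : Type*} [Fintype A] {w : ℕ → A}

noncomputable def freq (hfreq : UniformWordFrequencies w) (v : List A) : ℝ :=
  (hfreq v).choose

lemma freq_spec (hfreq : UniformWordFrequencies w) (v : List A) :
    ∀ ε > (0:ℝ), ∃ L : ℕ, ∀ ℓ ≥ L, ∀ k : ℕ,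
      |(countOcc w v k ℓ : ℝ) / ℓ - freq hfreq v| < ε :=
  (hfreq v).choose_spec

lemma one_div_le_of_big {ℓ L : ℕ} {ε : ℝ} (hε : 0 < ε) (hℓ : ℓ ≥ max L (⌈1/ε⌉₊ + 1)) :
    (1:ℝ)/ℓ ≤ ε ∧ 1 ≤ ℓ ∧ L ≤ ℓ := by
  have h1 : (⌈1/ε⌉₊ + 1 : ℕ) ≤ ℓ := le_trans (le_max_right _ _) hℓ
  have h2 : (1:ℝ)/ε ≤ ⌈1/ε⌉₊ := Nat.le_ceil _
  have h3 : (1:ℝ)/ε < ℓ := by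
    have : ((⌈1/ε⌉₊ + 1 : ℕ) : ℝ) ≤ ℓ := Nat.cast_le.2 h1
    push_cast at this; linarith
  have hℓpos : (0:ℝ) < ℓ := lt_of_le_of_lt (by positivity) h3
  refine ⟨?_, by omega, le_trans (le_max_left _ _) hℓ⟩
  rw [div_le_iff₀ hℓpos]
  rw [div_lt_iff₀ hε] at h3
  linarith

lemma freq_nonneg (hfreq : UniformWordFrequencies w) (v : List A) :
    0 ≤ freq hfreq v := by
  by_contra hneg
  push_neg at hneg
  obtain ⟨L, hL⟩ := freq_spec hfreq v (-freq hfreq v) (by linarith)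
  have := hL (max L 1) (le_max_left _ _) 0
  have hpos : (0:ℝ) ≤ (countOcc w v 0 (max L 1) : ℝ) / (max L 1 : ℕ) := by positivity
  rw [abs_lt] at this
  linarith [this.2]

lemma occursAtG_nil (p : ℕ) : occursAtG w [] p := by
  intro i hi; simp at hi

lemma countOcc_nil (k ℓ : ℕ) : countOcc w [] k ℓ = ℓ + 1 := by
  classical
  rw [countOcc_card]
  have : ∀ j : ℕ, occursAtG w [] (k + j) := fun j => occursAtG_nil _
  simp [this]

lemma freq_nil (hfreq : UniformWordFrequencies w) : freq hfreq [] = 1 := by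
  apply eq_of_abs_sub_le'
  intro ε hε
  obtain ⟨L, hL⟩ := freq_spec hfreq [] (ε/2) (by linarith)
  set ℓ := max L (⌈1/(ε/2)⌉₊ + 1) with hℓdef
  obtain ⟨hd, h1, hLl⟩ := one_div_le_of_big (by linarith : (0:ℝ) < ε/2) (le_refl ℓ)
  have hspec := hL ℓ hLl 0
  rw [countOcc_nil] at hspec
  have hℓpos : (0:ℝ) < ℓ := by exact_mod_cast Nat.pos_of_ne_zero (by omega)
  have key : |((ℓ:ℝ) + 1)/ℓ - 1| = 1/ℓ := by
    rw [add_div, div_self (ne_of_gt hℓpos)]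
    simp
  have : |freq hfreq [] - 1| ≤ |freq hfreq [] - ((ℓ:ℝ)+1)/ℓ| + |((ℓ:ℝ)+1)/ℓ - 1| := by
    have := abs_sub_le (freq hfreq []) (((ℓ:ℝ)+1)/ℓ) 1
    linarith
  rw [key] at this
  rw [abs_sub_comm] at hspec
  push_cast at hspec
  linarith

lemma freq_sum_eq (hfreq : UniformWordFrequencies w) (v : List A) (g : A → List A)
    (hc : ∀ k ℓ, (∑ a : A, countOcc w (g a) k ℓ) ≤ countOcc w v k ℓ ∧
      countOcc w v k ℓ ≤ (∑ a : A, countOcc w (g a) k ℓ) + 1) :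
    ∑ a : A, freq hfreq (g a) = freq hfreq v := by
  classical
  apply eq_of_abs_sub_le'
  intro ε hε
  set m := Fintype.card A with hm
  set ε' := ε / (m + 2) with hε'def
  have hε' : 0 < ε' := by positivity
  obtain ⟨L0, hL0⟩ := freq_spec hfreq v ε' hε'
  choose La hLa using fun a : A => freq_spec hfreq (g a) ε' hε'
  set L1 := Finset.univ.sup La with hL1
  set ℓ := max (max L0 L1) (⌈1/ε'⌉₊ + 1) with hℓdef
  obtain ⟨hd, h1, hLl⟩ := one_div_le_of_big hε' (le_refl ℓ)
  have hℓpos : (0:ℝ) < ℓ := by exact_mod_cast Nat.pos_of_ne_zero (by omega)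
  have hv := hL0 ℓ (le_trans (le_max_left _ _) hLl) 0
  have ha : ∀ a : A, |(countOcc w (g a) 0 ℓ : ℝ)/ℓ - freq hfreq (g a)| < ε' := by
    intro a
    exact hLa a ℓ (le_trans (le_trans (Finset.le_sup (Finset.mem_univ a)) (le_max_right L0 L1)) hLl) 0
  have hcc := hc 0 ℓ
  have hmid : |(∑ a : A, (countOcc w (g a) 0 ℓ : ℝ))/ℓ - (countOcc w v 0 ℓ : ℝ)/ℓ| ≤ 1/ℓ := by
    have hS : (∑ a : A, (countOcc w (g a) 0 ℓ : ℝ))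
        = ((∑ a : A, countOcc w (g a) 0 ℓ : ℕ) : ℝ) := by push_cast; ring
    rw [hS, div_sub_div_same, abs_div, abs_of_pos hℓpos]
    gcongr
    have c1 : ((∑ a : A, countOcc w (g a) 0 ℓ : ℕ) : ℝ) ≤ (countOcc w v 0 ℓ : ℝ) :=
      Nat.cast_le.2 hcc.1
    have c2 : (countOcc w v 0 ℓ : ℝ) ≤ ((∑ a : A, countOcc w (g a) 0 ℓ : ℕ) : ℝ) + 1 := by
      exact_mod_cast hcc.2
    rw [abs_le]
    constructor <;> linarith
  have hsum1 : |(∑ a : A, freq hfreq (g a)) - (∑ a : A, (countOcc w (g a) 0 ℓ : ℝ))/ℓ| ≤ m * ε' := by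
    have : (∑ a : A, (countOcc w (g a) 0 ℓ : ℝ))/ℓ = ∑ a : A, (countOcc w (g a) 0 ℓ : ℝ)/ℓ := by
      rw [Finset.sum_div]
    rw [this, ← Finset.sum_sub_distrib]
    calc |∑ a : A, (freq hfreq (g a) - (countOcc w (g a) 0 ℓ : ℝ)/ℓ)|
        ≤ ∑ a : A, |freq hfreq (g a) - (countOcc w (g a) 0 ℓ : ℝ)/ℓ| :=
          Finset.abs_sum_le_sum_abs _ _
      _ ≤ ∑ _a : A, ε' := by
          apply Finset.sum_le_sum
          intro a _
          rw [abs_sub_comm]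
          exact le_of_lt (ha a)
      _ = m * ε' := by rw [Finset.sum_const, Finset.card_univ]; push_cast; ring
  have tri : |(∑ a : A, freq hfreq (g a)) - freq hfreq v|
      ≤ |(∑ a : A, freq hfreq (g a)) - (∑ a : A, (countOcc w (g a) 0 ℓ : ℝ))/ℓ|
        + |(∑ a : A, (countOcc w (g a) 0 ℓ : ℝ))/ℓ - (countOcc w v 0 ℓ : ℝ)/ℓ|
        + |(countOcc w v 0 ℓ : ℝ)/ℓ - freq hfreq v| := by
    have t1 := abs_sub_le ((∑ a : A, freq hfreq (g a)))
      ((∑ a : A, (countOcc w (g a) 0 ℓ : ℝ))/ℓ) (freq hfreq v)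
    have t2 := abs_sub_le ((∑ a : A, (countOcc w (g a) 0 ℓ : ℝ))/ℓ)
      ((countOcc w v 0 ℓ : ℝ)/ℓ) (freq hfreq v)
    linarith
  have : |(∑ a : A, freq hfreq (g a)) - freq hfreq v| ≤ m * ε' + 1/ℓ + ε' := by
    linarith [le_of_lt hv]
  have hfinal : m * ε' + 1/ℓ + ε' ≤ ε := by
    have : (m:ℝ) * ε' + ε' + ε' = (m + 2) * ε' := by ring
    have h2 : ((m:ℝ) + 2) * ε' = ε := by
      rw [hε'def]; field_simp
    linarith
  linarith

lemma freq_zero_of_not_occur (hfreq : UniformWordFrequencies w) (v : List A)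
    (h : ∀ p : ℕ, ¬ occursAtG w v p) : freq hfreq v = 0 := by
  apply eq_of_abs_sub_le'
  intro ε hε
  obtain ⟨L, hL⟩ := freq_spec hfreq v ε hε
  classical
  have hz : countOcc w v 0 (max L 1) = 0 := by
    rw [countOcc_card]
    rw [Finset.card_eq_zero, Finset.filter_eq_empty_iff]
    intro j _
    exact h _
  have := hL (max L 1) (le_max_left _ _) 0
  rw [hz] at this
  simp only [Nat.cast_zero, zero_div, zero_sub, abs_neg] at this
  rw [abs_sub_comm]
  simpa using le_of_lt this

end Freq


section Interval

variable {A : Type*} [Fintype A]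

noncomputable def enumA (a₀ : A) (i : ℕ) : A :=
  if h : i < Fintype.card A then (Fintype.equivFin A).symm ⟨i, h⟩ else a₀

noncomputable def idxA (a : A) : ℕ := (Fintype.equivFin A a : ℕ)

lemma idxA_lt (a : A) : idxA a < Fintype.card A := (Fintype.equivFin A a).2

lemma enumA_idxA (a₀ a : A) : enumA a₀ (idxA a) = a := by
  rw [enumA, dif_pos (idxA_lt a)]
  simp [idxA]

lemma enumA_inj (a₀ : A) {i i' : ℕ} (hi : i < Fintype.card A) (hi' : i' < Fintype.card A)
    (h : enumA a₀ i = enumA a₀ i') : i = i' := by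
  rw [enumA, dif_pos hi, enumA, dif_pos hi'] at h
  have := (Fintype.equivFin A).symm.injective h
  exact Fin.mk.inj_iff.1 this

lemma sum_enumA (a₀ : A) (h : A → ℝ) :
    ∑ i ∈ Finset.range (Fintype.card A), h (enumA a₀ i) = ∑ a : A, h a := by
  rw [Finset.sum_range fun i => h (enumA a₀ i)]
  rw [← Equiv.sum_comp (Fintype.equivFin A).symm h]
  apply Finset.sum_congr rfl
  intro i _
  congr 1
  rw [enumA, dif_pos i.2]

noncomputable def pSum (f : List A → ℝ) (a₀ : A) (v : List A) (i : ℕ) : ℝ :=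
  ∑ j ∈ Finset.range i, f (v ++ [enumA a₀ j])

noncomputable def theIdx (f : List A → ℝ) (a₀ : A) (v : List A) (s : ℝ) : ℕ :=
  if h : ∃ i, i < Fintype.card A ∧ pSum f a₀ v i ≤ s ∧
      s < pSum f a₀ v i + f (v ++ [enumA a₀ i]) then h.choose else 0

noncomputable def stw (f : List A → ℝ) (a₀ : A) (t : ℝ) : ℕ → List A × ℝ
  | 0 => ([], 0)
  | n+1 =>
    ((stw f a₀ t n).1 ++ [enumA a₀ (theIdx f a₀ (stw f a₀ t n).1 (t - (stw f a₀ t n).2))],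
      (stw f a₀ t n).2 + pSum f a₀ (stw f a₀ t n).1 (theIdx f a₀ (stw f a₀ t n).1 (t - (stw f a₀ t n).2)))

variable {f : List A → ℝ} {a₀ : A}

lemma exists_bracket (hf0 : ∀ u, 0 ≤ f u)
    (hfR : ∀ u : List A, ∑ a : A, f (u ++ [a]) = f u) {v : List A} {s : ℝ}
    (h0 : 0 ≤ s) (h1 : s < f v) :
    ∃ i, i < Fintype.card A ∧ pSum f a₀ v i ≤ s ∧
      s < pSum f a₀ v i + f (v ++ [enumA a₀ i]) := by
  have key : ∀ M : ℕ, s < pSum f a₀ v M →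
      ∃ i, i < M ∧ pSum f a₀ v i ≤ s ∧ s < pSum f a₀ v i + f (v ++ [enumA a₀ i]) := by
    intro M
    induction M with
    | zero => intro h; simp [pSum] at h; linarith
    | succ M ih =>
      intro h
      rcases lt_or_ge s (pSum f a₀ v M) with h' | h'
      · obtain ⟨i, hi, hb⟩ := ih h'
        exact ⟨i, Nat.lt_succ_of_lt hi, hb⟩
      · refine ⟨M, Nat.lt_succ_self M, h', ?_⟩
        rw [pSum, Finset.sum_range_succ] at h
        exact h
  apply key
  rw [pSum, sum_enumA a₀ (fun a => f (v ++ [a])), hfR]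
  exact h1

lemma pSum_mono (hf0 : ∀ u, 0 ≤ f u) (v : List A) {i i' : ℕ} (h : i ≤ i') :
    pSum f a₀ v i ≤ pSum f a₀ v i' := by
  apply Finset.sum_le_sum_of_subset_of_nonneg (Finset.range_subset_range.2 h)
  intro j _ _
  exact hf0 _

lemma bracket_unique (hf0 : ∀ u, 0 ≤ f u) {v : List A} {s : ℝ} {i i' : ℕ}
    (hb : pSum f a₀ v i ≤ s ∧ s < pSum f a₀ v i + f (v ++ [enumA a₀ i]))
    (hb' : pSum f a₀ v i' ≤ s ∧ s < pSum f a₀ v i' + f (v ++ [enumA a₀ i'])) :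
    i = i' := by
  by_contra hne
  rcases Nat.lt_or_ge i i' with h | h
  · have : pSum f a₀ v i + f (v ++ [enumA a₀ i]) ≤ pSum f a₀ v i' := by
      have : pSum f a₀ v (i+1) ≤ pSum f a₀ v i' := pSum_mono hf0 v h
      rwa [pSum, Finset.sum_range_succ, ← pSum] at this
    linarith [hb.2, hb'.1]
  · have h' : i' < i := by omega
    have : pSum f a₀ v i' + f (v ++ [enumA a₀ i']) ≤ pSum f a₀ v i := by
      have : pSum f a₀ v (i'+1) ≤ pSum f a₀ v i := pSum_mono hf0 v h'
      rwa [pSum, Finset.sum_range_succ, ← pSum] at this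
    linarith [hb'.2, hb.1]

lemma theIdx_spec (hf0 : ∀ u, 0 ≤ f u)
    (hfR : ∀ u : List A, ∑ a : A, f (u ++ [a]) = f u) {v : List A} {s : ℝ}
    (h0 : 0 ≤ s) (h1 : s < f v) :
    theIdx f a₀ v s < Fintype.card A ∧ pSum f a₀ v (theIdx f a₀ v s) ≤ s ∧
      s < pSum f a₀ v (theIdx f a₀ v s) + f (v ++ [enumA a₀ (theIdx f a₀ v s)]) := by
  have h := exists_bracket (a₀ := a₀) hf0 hfR h0 h1
  rw [theIdx, dif_pos h]
  exact h.choose_spec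

lemma theIdx_eq (hf0 : ∀ u, 0 ≤ f u)
    (hfR : ∀ u : List A, ∑ a : A, f (u ++ [a]) = f u) {v : List A} {s : ℝ} {i : ℕ}
    (hi : i < Fintype.card A) (hb : pSum f a₀ v i ≤ s ∧ s < pSum f a₀ v i + f (v ++ [enumA a₀ i])) :
    theIdx f a₀ v s = i := by
  have h : ∃ i, i < Fintype.card A ∧ pSum f a₀ v i ≤ s ∧
      s < pSum f a₀ v i + f (v ++ [enumA a₀ i]) := ⟨i, hi, hb⟩
  rw [theIdx, dif_pos h]
  exact bracket_unique hf0 ⟨h.choose_spec.2.1, h.choose_spec.2.2⟩ hb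

lemma theIdx_lt (a₀ : A) (f : List A → ℝ) (v : List A) (s : ℝ) :
    theIdx f a₀ v s < Fintype.card A := by
  have hm : 0 < Fintype.card A := Fintype.card_pos_iff.2 ⟨a₀⟩
  rw [theIdx]
  split
  · next h => exact h.choose_spec.1
  · exact hm

lemma stw_length (t : ℝ) (n : ℕ) : (stw f a₀ t n).1.length = n := by
  induction n with
  | zero => rfl
  | succ n ih => simp [stw, ih]

lemma stw_det (t t' : ℝ) (n : ℕ) (h : (stw f a₀ t n).1 = (stw f a₀ t' n).1) :
    (stw f a₀ t n).2 = (stw f a₀ t' n).2 := by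
  induction n with
  | zero => rfl
  | succ n ih =>
    have hsp : (stw f a₀ t (n+1)).1
        = (stw f a₀ t n).1 ++ [enumA a₀ (theIdx f a₀ (stw f a₀ t n).1 (t - (stw f a₀ t n).2))] := rfl
    have hsp' : (stw f a₀ t' (n+1)).1
        = (stw f a₀ t' n).1 ++ [enumA a₀ (theIdx f a₀ (stw f a₀ t' n).1 (t' - (stw f a₀ t' n).2))] := rfl
    rw [hsp, hsp'] at h
    have hlen : (stw f a₀ t n).1.length = (stw f a₀ t' n).1.length := by
      rw [stw_length, stw_length]
    obtain ⟨h1, h2⟩ := List.append_inj h hlen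
    have hc := ih h1
    have he : enumA a₀ (theIdx f a₀ (stw f a₀ t n).1 (t - (stw f a₀ t n).2))
        = enumA a₀ (theIdx f a₀ (stw f a₀ t' n).1 (t' - (stw f a₀ t' n).2)) := by
      simpa using h2
    have hii : theIdx f a₀ (stw f a₀ t n).1 (t - (stw f a₀ t n).2)
        = theIdx f a₀ (stw f a₀ t' n).1 (t' - (stw f a₀ t' n).2) :=
      enumA_inj a₀ (theIdx_lt a₀ f _ _) (theIdx_lt a₀ f _ _) he
    show (stw f a₀ t n).2 + _ = (stw f a₀ t' n).2 + _
    rw [hii, hc, h1]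

lemma stw_invariant (hf0 : ∀ u, 0 ≤ f u)
    (hfR : ∀ u : List A, ∑ a : A, f (u ++ [a]) = f u) (hfnil : f [] = 1)
    {t : ℝ} (ht : 0 ≤ t ∧ t < 1) (n : ℕ) :
    (stw f a₀ t n).2 ≤ t ∧ t < (stw f a₀ t n).2 + f (stw f a₀ t n).1 := by
  induction n with
  | zero =>
    constructor
    · exact ht.1
    · show t < 0 + f []
      rw [hfnil]; linarith [ht.2]
  | succ n ih =>
    set v := (stw f a₀ t n).1
    set c := (stw f a₀ t n).2
    have hs0 : 0 ≤ t - c := by linarith [ih.1]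
    have hs1 : t - c < f v := by linarith [ih.2]
    obtain ⟨hlt, hb1, hb2⟩ := theIdx_spec (a₀ := a₀) hf0 hfR hs0 hs1
    constructor
    · show c + pSum f a₀ v _ ≤ t
      linarith
    · show t < c + pSum f a₀ v _ + f (v ++ [enumA a₀ _])
      linarith

lemma stw_succ_iff (hf0 : ∀ u, 0 ≤ f u) (t : ℝ) (n : ℕ) (v : List A) (a : A)
    (hn : v.length = n) :
    (stw f a₀ t (n+1)).1 = v ++ [a] ↔
      ((stw f a₀ t n).1 = v ∧
        enumA a₀ (theIdx f a₀ v (t - (stw f a₀ t n).2)) = a) := by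
  have hsp : (stw f a₀ t (n+1)).1
      = (stw f a₀ t n).1 ++ [enumA a₀ (theIdx f a₀ (stw f a₀ t n).1 (t - (stw f a₀ t n).2))] := rfl
  rw [hsp]
  constructor
  · intro h
    have hlen : (stw f a₀ t n).1.length = v.length := by rw [stw_length, hn]
    obtain ⟨h1, h2⟩ := List.append_inj h hlen
    refine ⟨h1, ?_⟩
    rw [← h1]
    simpa using h2
  · rintro ⟨h1, h2⟩
    rw [h1, h2]


lemma stw_interval (hf0 : ∀ u, 0 ≤ f u)
    (hfR : ∀ u : List A, ∑ a : A, f (u ++ [a]) = f u) (hfnil : f [] = 1)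
    (v : List A) :
    ∃ α : ℝ, 0 ≤ α ∧ α + f v ≤ 1 ∧
      {t : ℝ | (0 ≤ t ∧ t < 1) ∧ (stw f a₀ t v.length).1 = v} = Set.Ico α (α + f v) := by
  induction v using List.reverseRecOn with
  | nil =>
    refine ⟨0, le_refl 0, by rw [hfnil]; norm_num, ?_⟩
    ext t
    simp only [Set.mem_setOf_eq, Set.mem_Ico, List.length_nil]
    rw [hfnil]
    constructor
    · rintro ⟨⟨h1, h2⟩, _⟩; exact ⟨h1, by linarith⟩
    · rintro ⟨h1, h2⟩; exact ⟨⟨h1, by linarith⟩, rfl⟩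
  | append_singleton v a ih =>
    obtain ⟨α, hα0, hα1, hset⟩ := ih
    set n := v.length with hn
    have hlen : (v ++ [a]).length = n + 1 := by simp [hn]
    have hfva_le : f (v ++ [a]) ≤ f v := by
      rw [← hfR v]
      exact Finset.single_le_sum (f := fun b => f (v ++ [b])) (fun b _ => hf0 _)
        (Finset.mem_univ a)
    set ia := idxA a with hia
    set ps := pSum f a₀ v ia with hps
    have hps0 : 0 ≤ ps := Finset.sum_nonneg fun j _ => hf0 _
    have hps1 : ps + f (v ++ [a]) ≤ f v := by
      have h1 : pSum f a₀ v (ia + 1) = ps + f (v ++ [a]) := by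
        rw [pSum, Finset.sum_range_succ, ← pSum, ← hps, enumA_idxA]
      have h2 : pSum f a₀ v (ia + 1) ≤ pSum f a₀ v (Fintype.card A) :=
        pSum_mono hf0 v (idxA_lt a)
      have h3 : pSum f a₀ v (Fintype.card A) = f v := by
        rw [pSum, sum_enumA a₀ (fun b => f (v ++ [b])), hfR]
      linarith
    rcases le_or_gt (f v) 0 with hfv | hfv
    · have hfv0 : f v = 0 := le_antisymm hfv (hf0 v)
      have hfva0 : f (v ++ [a]) = 0 := le_antisymm (by linarith) (hf0 _)
      refine ⟨α, hα0, by rw [hfva0]; linarith, ?_⟩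
      rw [hfva0, add_zero, Set.Ico_self]
      ext t
      simp only [Set.mem_setOf_eq, Set.mem_empty_iff_false, iff_false, not_and]
      intro hcond habs
      rw [hlen, stw_succ_iff hf0 t n v a hn.symm] at habs
      have : t ∈ ({t : ℝ | (0 ≤ t ∧ t < 1) ∧ (stw f a₀ t v.length).1 = v}) :=
        ⟨hcond, by rw [← hn]; exact habs.1⟩
      rw [hset, hfv0, add_zero, Set.Ico_self] at this
      exact this
    · -- f v > 0 case
      have hαmem : α ∈ Set.Ico α (α + f v) := ⟨le_refl α, by linarith⟩
      have hαS : (0 ≤ α ∧ α < 1) ∧ (stw f a₀ α v.length).1 = v := by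
        have := hαmem
        rw [← hset] at this
        exact this
      have hcα : ∀ t ∈ Set.Ico α (α + f v), (stw f a₀ t n).2 = (stw f a₀ α n).2 := by
        intro t ht
        have htS : (0 ≤ t ∧ t < 1) ∧ (stw f a₀ t v.length).1 = v := by
          rw [← hset] at ht; exact ht
        apply stw_det
        rw [htS.2, hαS.2]
      set γ := (stw f a₀ α n).2 with hγ
      have hbound : ∀ t ∈ Set.Ico α (α + f v), γ ≤ t ∧ t < γ + f v := by
        intro t ht
        have htS : (0 ≤ t ∧ t < 1) ∧ (stw f a₀ t v.length).1 = v := by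
          rw [← hset] at ht; exact ht
        have hinv := stw_invariant (a₀ := a₀) hf0 hfR hfnil htS.1 n
        rw [show (stw f a₀ t n).1 = v from htS.2] at hinv
        rw [← hcα t ht]
        exact hinv
      have hγα : γ = α := by
        have h1 : γ ≤ α := (hbound α hαmem).1
        have h2 : α ≤ γ := by
          by_contra hcon
          push_neg at hcon
          set t := max α (γ + f v) with htdef
          have ht1 : α ≤ t := le_max_left _ _
          have ht2 : t < α + f v := by
            apply max_lt (by linarith) (by linarith)
          have := (hbound t ⟨ht1, ht2⟩).2
          have : γ + f v ≤ t := le_max_right _ _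
          linarith [(hbound t ⟨ht1, ht2⟩).2]
        linarith
      refine ⟨α + ps, by linarith, by linarith, ?_⟩
      ext t
      simp only [Set.mem_setOf_eq, Set.mem_Ico]
      rw [hlen, stw_succ_iff hf0 t n v a hn.symm]
      constructor
      · rintro ⟨hcond, hv, ha⟩
        have htIco : t ∈ Set.Ico α (α + f v) := by
          rw [← hset]
          exact ⟨hcond, hv⟩
        have hct : (stw f a₀ t n).2 = α := by rw [hcα t htIco]; exact hγα
        rw [hct] at ha
        have hs0 : 0 ≤ t - α := by linarith [htIco.1]
        have hs1 : t - α < f v := by linarith [htIco.2]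
        obtain ⟨hlt, hb1, hb2⟩ := theIdx_spec (a₀ := a₀) hf0 hfR hs0 hs1
        have hieq : theIdx f a₀ v (t - α) = ia := by
          apply enumA_inj a₀ hlt (idxA_lt a)
          rw [ha, enumA_idxA]
        rw [hieq] at hb1 hb2
        rw [hia, enumA_idxA] at hb2
        rw [hia] at hb1
        have hps' : ps = pSum f a₀ v (idxA a) := by rw [hps, hia]
        constructor <;> linarith
      · rintro ⟨ht1, ht2⟩
        have htIco : t ∈ Set.Ico α (α + f v) := ⟨by linarith, by linarith⟩
        have htS : (0 ≤ t ∧ t < 1) ∧ (stw f a₀ t v.length).1 = v := by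
          rw [← hset] at htIco; exact htIco
        have hct : (stw f a₀ t n).2 = α := by rw [hcα t ⟨by linarith, by linarith⟩]; exact hγα
        refine ⟨htS.1, htS.2, ?_⟩
        rw [hct]
        have hps' : ps = pSum f a₀ v (idxA a) := by rw [hps, hia]
        have hb : pSum f a₀ v (idxA a) ≤ t - α ∧
            t - α < pSum f a₀ v (idxA a) + f (v ++ [enumA a₀ (idxA a)]) := by
          rw [enumA_idxA]
          constructor <;> linarith
        rw [theIdx_eq hf0 hfR (idxA_lt a) hb, enumA_idxA]

noncomputable def Gw (f : List A → ℝ) (a₀ : A) (t : ℝ) (n : ℕ) : A :=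
  (stw f a₀ t (n+1)).1.getD n a₀

lemma stw_getD (t : ℝ) {n N : ℕ} (h : n < N) :
    (stw f a₀ t N).1.getD n a₀ = Gw f a₀ t n := by
  induction N with
  | zero => omega
  | succ N ih =>
    rcases Nat.lt_succ_iff_lt_or_eq.1 h with h' | h'
    · have hsp : (stw f a₀ t (N+1)).1
          = (stw f a₀ t N).1 ++ [enumA a₀ (theIdx f a₀ (stw f a₀ t N).1 (t - (stw f a₀ t N).2))] := rfl
      rw [hsp, List.getD_append _ _ _ _ (by rw [stw_length]; exact h')]
      exact ih h'
    · subst h'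
      rfl

lemma stw_eq_iff (t : ℝ) (v : List A) :
    (stw f a₀ t v.length).1 = v ↔ ∀ i < v.length, Gw f a₀ t i = v.getD i a₀ := by
  constructor
  · intro h i hi
    rw [← stw_getD t hi, h]
  · intro h
    apply List.ext_getElem (by rw [stw_length])
    intro i h1 h2
    rw [← List.getD_eq_getElem _ a₀ h1, ← List.getD_eq_getElem _ a₀ h2]
    rw [stw_length] at h1
    rw [stw_getD t h1]
    exact h i h1

lemma stw_eq_iff' (t : ℝ) (v : List A) {n : ℕ} (hn : v.length = n) :
    (stw f a₀ t n).1 = v ↔ ∀ i < n, Gw f a₀ t i = v.getD i a₀ := by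
  subst hn; exact stw_eq_iff t v

end Interval



section Main

variable {A : Type*} [Fintype A] [TopologicalSpace A] [DiscreteTopology A]
  [MeasurableSpace A] [MeasurableSingletonClass A]

/-- word cylinder -/
def cylG (w : ℕ → A) (v : List A) : Set (ℕ → A) := {x | ∀ i < v.length, x i = v.getD i (w 0)}

variable (w : ℕ → A)

lemma measurableSet_cylG (v : List A) : MeasurableSet (cylG w v) := by
  have : cylG w v = ⋂ i : Fin v.length, (fun x : ℕ → A => x i.1) ⁻¹' {v.getD i.1 (w 0)} := by
    ext x
    simp only [cylG, Set.mem_setOf_eq, Set.mem_iInter, Set.mem_preimage, Set.mem_singleton_iff]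
    exact ⟨fun h i => h i.1 i.2, fun h i hi => h ⟨i, hi⟩⟩
  rw [this]
  exact MeasurableSet.iInter fun i =>
    (measurable_pi_apply i.1) (measurableSet_singleton _)

lemma getD_ofFn {n : ℕ} (φ : Fin n → A) (i : ℕ) (hi : i < n) (d : A) :
    (List.ofFn φ).getD i d = φ ⟨i, hi⟩ := by
  rw [List.getD_eq_getElem _ _ (by simp [hi])]
  simp

lemma coord_eq_iUnion_cylG (i : ℕ) (a : A) :
    {x : ℕ → A | x i = a}
      = ⋃ (φ : Fin (i+1) → A) (_ : φ (Fin.last i) = a), cylG w (List.ofFn φ) := by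
  ext x
  simp only [Set.mem_setOf_eq, Set.mem_iUnion]
  constructor
  · intro h
    refine ⟨fun j => x j.1, by simpa [Fin.last] using h, ?_⟩
    intro j hj
    rw [List.length_ofFn] at hj
    rw [getD_ofFn _ j hj]
  · rintro ⟨φ, hφ, hx⟩
    have := hx i (by simp)
    rw [getD_ofFn _ i (by omega)] at this
    rw [this]
    exact hφ

lemma generateFrom_cylG :
    (MeasurableSpace.pi : MeasurableSpace (ℕ → A))
      = MeasurableSpace.generateFrom (Set.range (cylG w)) := by
  apply le_antisymm
  · have hpi : (MeasurableSpace.pi : MeasurableSpace (ℕ → A))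
        = ⨆ i : ℕ, MeasurableSpace.comap (fun x : ℕ → A => x i) inferInstance := rfl
    rw [hpi]
    apply iSup_le
    intro i
    intro s hs
    obtain ⟨s', hs', rfl⟩ := hs
    have : (fun x : ℕ → A => x i) ⁻¹' s' = ⋃ a ∈ s', {x : ℕ → A | x i = a} := by
      ext x
      simp only [Set.mem_preimage, Set.mem_iUnion, Set.mem_setOf_eq]
      constructor
      · intro h; exact ⟨x i, h, rfl⟩
      · rintro ⟨a, ha, h⟩; rw [h]; exact ha
    rw [this]
    apply MeasurableSet.biUnion (Set.to_countable _)
    intro a _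
    rw [coord_eq_iUnion_cylG w i a]
    apply MeasurableSet.iUnion
    intro φ
    apply MeasurableSet.iUnion
    intro _
    exact MeasurableSpace.measurableSet_generateFrom (Set.mem_range_self _)
  · apply MeasurableSpace.generateFrom_le
    rintro s ⟨v, rfl⟩
    exact measurableSet_cylG w v

lemma cylG_subset (v v' : List A) (hlen : v.length ≤ v'.length)
    (hne : (cylG w v ∩ cylG w v').Nonempty) : cylG w v' ⊆ cylG w v := by
  obtain ⟨x₀, hx₀, hx₀'⟩ := hne
  intro x hx
  intro i hi
  rw [hx i (lt_of_lt_of_le hi hlen), ← hx₀' i (lt_of_lt_of_le hi hlen), hx₀ i hi]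

lemma isPiSystem_cylG : IsPiSystem (Set.range (cylG w)) := by
  rintro _ ⟨v, rfl⟩ _ ⟨v', rfl⟩ hne
  rcases le_total v.length v'.length with h | h
  · rw [Set.inter_eq_right.2 (cylG_subset w v v' h hne)]
    exact Set.mem_range_self _
  · rw [Set.inter_eq_left.2 (cylG_subset w v' v h (by rwa [Set.inter_comm] at hne))]
    exact Set.mem_range_self _

lemma measure_ext_cylG (μ ν : Measure (ℕ → A)) [IsProbabilityMeasure μ] [IsProbabilityMeasure ν]
    (h : ∀ v : List A, μ (cylG w v) = ν (cylG w v)) : μ = ν := by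
  refine ext_of_generate_finite (Set.range (cylG w)) (generateFrom_cylG w) (isPiSystem_cylG w)
    ?_ (by simp)
  rintro s ⟨v, rfl⟩
  exact h v


open Classical in
noncomputable def Gmap (f : List A → ℝ) (a₀ : A) : ℝ → (ℕ → A) :=
  fun t => Gw f a₀ (if 0 ≤ t ∧ t < 1 then t else 0)

lemma Gmap_preim (f : List A → ℝ) (v : List A) :
    (Gmap f (w 0)) ⁻¹' (cylG w v) ∩ Set.Ico 0 1
      = {t : ℝ | (0 ≤ t ∧ t < 1) ∧ (stw f (w 0) t v.length).1 = v} := by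
  classical
  ext t
  simp only [Set.mem_inter_iff, Set.mem_preimage, Set.mem_Ico, Set.mem_setOf_eq]
  constructor
  · rintro ⟨hmem, ht⟩
    refine ⟨ht, ?_⟩
    rw [stw_eq_iff]
    intro i hi
    have := hmem i hi
    rw [Gmap, if_pos ht] at this
    exact this
  · rintro ⟨ht, hstw⟩
    refine ⟨?_, ht⟩
    intro i hi
    rw [Gmap, if_pos ht]
    exact (stw_eq_iff _ _).1 hstw i hi

lemma measurable_Gmap (f : List A → ℝ) (hf0 : ∀ u, 0 ≤ f u)
    (hfR : ∀ u : List A, ∑ a : A, f (u ++ [a]) = f u) (hfnil : f [] = 1) :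
    Measurable (Gmap f (w 0)) := by
  classical
  rw [measurable_pi_iff]
  intro n
  apply measurable_to_countable'
  intro a
  have hset : (fun t => Gmap f (w 0) t n) ⁻¹' {a}
      = (⋃ (φ : Fin (n+1) → A) (_ : φ (Fin.last n) = a),
          {t : ℝ | (0 ≤ t ∧ t < 1) ∧ (stw f (w 0) t (n+1)).1 = List.ofFn φ})
        ∪ (⋃ (_ : Gw f (w 0) 0 n = a), (Set.Ico (0:ℝ) 1)ᶜ) := by
    ext t
    simp only [Set.mem_preimage, Set.mem_singleton_iff, Set.mem_union, Set.mem_iUnion,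
      Set.mem_setOf_eq, Set.mem_compl_iff, Set.mem_Ico]
    rcases Classical.em (0 ≤ t ∧ t < 1) with ht | ht
    · rw [Gmap, if_pos ht]
      constructor
      · intro h
        left
        refine ⟨fun j => Gw f (w 0) t j.1, by simpa [Fin.last] using h, ht, ?_⟩
        rw [stw_eq_iff' (f := f) (a₀ := w 0) t _ (by simp)]
        intro i hi
        rw [getD_ofFn _ i hi]
      · rintro (⟨φ, hφ, _, hstw⟩ | ⟨_, hc⟩)
        · have := (stw_eq_iff' (f := f) (a₀ := w 0) t (List.ofFn φ) (by simp)).1 hstw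
          have h2 := this n (by omega)
          rw [getD_ofFn _ n (by omega)] at h2
          rw [h2]
          exact hφ
        · exact absurd ht hc
    · rw [Gmap, if_neg ht]
      constructor
      · intro h
        right
        exact ⟨h, ht⟩
      · rintro (⟨φ, hφ, hcond, hstw⟩ | ⟨h, _⟩)
        · exact absurd hcond ht
        · exact h
  show MeasurableSet ((fun t => Gmap f (w 0) t n) ⁻¹' {a})
  rw [hset]
  apply MeasurableSet.union
  · apply MeasurableSet.iUnion
    intro φ
    apply MeasurableSet.iUnion
    intro _
    obtain ⟨α, _, _, hs⟩ := stw_interval (a₀ := w 0) hf0 hfR hfnil (List.ofFn φ)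
    rw [List.length_ofFn] at hs
    rw [hs]
    exact measurableSet_Ico
  · apply MeasurableSet.iUnion
    intro _
    exact measurableSet_Ico.compl

noncomputable def muW (f : List A → ℝ) (a₀ : A) : Measure (ℕ → A) :=
  (volume.restrict (Set.Ico (0:ℝ) 1)).map (Gmap f a₀)

lemma muW_cylG (f : List A → ℝ) (hf0 : ∀ u, 0 ≤ f u)
    (hfR : ∀ u : List A, ∑ a : A, f (u ++ [a]) = f u) (hfnil : f [] = 1) (v : List A) :
    muW f (w 0) (cylG w v) = ENNReal.ofReal (f v) := by
  rw [muW, Measure.map_apply (measurable_Gmap w f hf0 hfR hfnil) (measurableSet_cylG w v),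
    Measure.restrict_apply' measurableSet_Ico, Gmap_preim]
  obtain ⟨α, _, _, hs⟩ := stw_interval (a₀ := w 0) hf0 hfR hfnil v
  rw [hs, Real.volume_Ico]
  congr 1
  ring

lemma muW_prob (f : List A → ℝ) (hf0 : ∀ u, 0 ≤ f u)
    (hfR : ∀ u : List A, ∑ a : A, f (u ++ [a]) = f u) (hfnil : f [] = 1) :
    IsProbabilityMeasure (muW f (w 0)) := by
  constructor
  rw [muW, Measure.map_apply (measurable_Gmap w f hf0 hfR hfnil) MeasurableSet.univ,
    Set.preimage_univ, Measure.restrict_apply' measurableSet_Ico, Set.univ_inter,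
    Real.volume_Ico]
  norm_num

lemma measurable_shiftMap : Measurable (shiftMap : (ℕ → A) → (ℕ → A)) :=
  measurable_pi_iff.2 fun n => measurable_pi_apply (n+1)

lemma shift_preimage_cylG (v : List A) :
    shiftMap ⁻¹' (cylG w v) = ⋃ a : A, cylG w (a :: v) := by
  ext x
  simp only [Set.mem_preimage, Set.mem_iUnion, cylG, Set.mem_setOf_eq, shiftMap]
  constructor
  · intro h
    refine ⟨x 0, ?_⟩
    intro i hi
    match i with
    | 0 => simp
    | (i+1) =>
      rw [List.getD_cons_succ]
      exact h i (by simpa using hi)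
  · rintro ⟨a, h⟩ i hi
    have := h (i+1) (by simpa using hi)
    rwa [List.getD_cons_succ] at this


lemma mem_closure_window {x : ℕ → A}
    (hx : x ∈ closure {y : ℕ → A | ∃ k : ℕ, y = fun n => w (n + k)}) (ℓ : ℕ) :
    ∃ k, ∀ i < ℓ, x i = w (k + i) := by
  set U := ⋂ i : Fin ℓ, (fun y : ℕ → A => y i.1) ⁻¹' {x i.1} with hU
  have hUopen : IsOpen U := by
    apply isOpen_iInter_of_finite
    intro i
    exact (continuous_apply (i.1 : ℕ)).isOpen_preimage _ (isOpen_discrete _)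
  have hxU : x ∈ U := by
    rw [hU]
    simp
  obtain ⟨y, hyU, k, hyk⟩ := mem_closure_iff.1 hx U hUopen hxU
  refine ⟨k, ?_⟩
  intro i hi
  have h1 : y i ∈ ({x i} : Set A) := by
    have := Set.mem_iInter.1 hyU ⟨i, hi⟩
    exact this
  have h2 : y i = x i := h1
  rw [← h2, hyk]
  simp only []
  rw [Nat.add_comm]

lemma compl_closure_subset :
    (closure {y : ℕ → A | ∃ k : ℕ, y = fun n => w (n + k)})ᶜ
      ⊆ ⋃ (v : List A) (_ : ∀ p, ¬ occursAtG w v p), cylG w v := by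
  intro x hx
  have hU : (closure {y : ℕ → A | ∃ k : ℕ, y = fun n => w (n + k)})ᶜ ∈ nhds x :=
    (isClosed_closure.isOpen_compl).mem_nhds hx
  rw [nhds_pi] at hU
  obtain ⟨I, hIfin, t, ht, hsub⟩ := Filter.mem_pi.1 hU
  have hbdd : ∃ b : ℕ, ∀ i ∈ I, i ≤ b := by
    rcases Set.eq_empty_or_nonempty I with h | h
    · exact ⟨0, by simp [h]⟩
    · obtain ⟨b, hb⟩ := hIfin.bddAbove
      exact ⟨b, fun i hi => hb hi⟩
  obtain ⟨b, hb⟩ := hbdd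
  set ℓ := b + 1 with hℓ
  set v := List.ofFn (fun i : Fin ℓ => x i.1) with hv
  have hmemcyl : x ∈ cylG w v := by
    intro i hi
    rw [hv, List.length_ofFn] at hi
    rw [hv, getD_ofFn _ i hi]
  refine Set.mem_iUnion.2 ⟨v, Set.mem_iUnion.2 ⟨?_, hmemcyl⟩⟩
  intro p hocc
  set y : ℕ → A := fun n => w (n + p) with hy
  have hyS : y ∈ {y : ℕ → A | ∃ k : ℕ, y = fun n => w (n + k)} := ⟨p, rfl⟩
  have hyx : ∀ i < ℓ, y i = x i := by
    intro i hi
    have h1 := hocc i (by rw [hv, List.length_ofFn]; exact hi)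
    rw [hv, getD_ofFn _ i hi] at h1
    have h2 : x i = w (p + i) := h1
    rw [hy]
    show w (i + p) = x i
    rw [h2]
    congr 1
    omega
  have hyU : y ∈ I.pi t := by
    intro i hiI
    have hib : i < ℓ := by have := hb i hiI; omega
    rw [hyx i hib]
    exact mem_of_mem_nhds (ht i)
  have : y ∈ (closure {y : ℕ → A | ∃ k : ℕ, y = fun n => w (n + k)})ᶜ := hsub hyU
  exact this (subset_closure hyS)

lemma shift_iterate_apply (j : ℕ) (x : ℕ → A) (i : ℕ) :
    (shiftMap^[j] x) i = x (i + j) := by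
  induction j generalizing x with
  | zero => rfl
  | succ j ih =>
    rw [Function.iterate_succ_apply]
    rw [ih (shiftMap x)]
    rfl

lemma nu_iterate_preimage (ν : Measure (ℕ → A)) (hinv : ν.map shiftMap = ν)
    (j : ℕ) {B : Set (ℕ → A)} (hB : MeasurableSet B) :
    ν ((shiftMap^[j]) ⁻¹' B) = ν B := by
  induction j with
  | zero => rfl
  | succ j ih =>
    rw [Function.iterate_succ]
    rw [Set.preimage_comp]
    have hC : MeasurableSet ((shiftMap^[j] : (ℕ → A) → (ℕ → A)) ⁻¹' B) :=
      (measurable_shiftMap.iterate j) hB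
    calc ν (shiftMap ⁻¹' ((shiftMap^[j] : (ℕ → A) → (ℕ → A)) ⁻¹' B))
        = (ν.map shiftMap) ((shiftMap^[j] : (ℕ → A) → (ℕ → A)) ⁻¹' B) :=
          (Measure.map_apply measurable_shiftMap hC).symm
      _ = ν ((shiftMap^[j] : (ℕ → A) → (ℕ → A)) ⁻¹' B) := by rw [hinv]
      _ = ν B := ih

lemma const_div_le_of_big {ℓ L : ℕ} {c ε : ℝ} (hc : 0 ≤ c) (hε : 0 < ε)
    (hℓ : ℓ ≥ max L (⌈c/ε⌉₊ + 1)) :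
    c/ℓ ≤ ε ∧ 1 ≤ ℓ ∧ L ≤ ℓ := by
  have h1 : (⌈c/ε⌉₊ + 1 : ℕ) ≤ ℓ := le_trans (le_max_right _ _) hℓ
  have h2 : c/ε ≤ ⌈c/ε⌉₊ := Nat.le_ceil _
  have h3 : c/ε < ℓ := by
    have : ((⌈c/ε⌉₊ + 1 : ℕ) : ℝ) ≤ ℓ := Nat.cast_le.2 h1
    push_cast at this; linarith
  have hℓpos : (0:ℝ) < ℓ := by
    have : (0:ℝ) ≤ c/ε := by positivity
    linarith
  refine ⟨?_, by omega, le_trans (le_max_left _ _) hℓ⟩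
  rw [div_le_iff₀ hℓpos]
  rw [div_lt_iff₀ hε] at h3
  linarith

lemma nu_cylG (hfreq : UniformWordFrequencies w) (ν : Measure (ℕ → A))
    [IsProbabilityMeasure ν]
    (hsupp : ν (closure {y : ℕ → A | ∃ k : ℕ, y = fun n => w (n + k)})ᶜ = 0)
    (hinv : ν.map shiftMap = ν) (v : List A) :
    ν (cylG w v) = ENNReal.ofReal (freq hfreq v) := by
  classical
  set n := v.length with hn
  set c := (ν (cylG w v)).toReal with hc
  suffices hcf : c = freq hfreq v by
    rw [← hcf, hc, ENNReal.ofReal_toReal (measure_ne_top _ _)]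
  have hc0 : 0 ≤ c := ENNReal.toReal_nonneg
  have hc1 : c ≤ 1 := by
    rw [hc]
    refine ENNReal.toReal_le_of_le_ofReal zero_le_one ?_
    rw [ENNReal.ofReal_one]
    exact prob_le_one
  apply eq_of_abs_sub_le'
  intro ε' hε'
  set ε := ε'/2 with hεdef
  have hε : 0 < ε := by rw [hεdef]; linarith
  obtain ⟨L, hL⟩ := freq_spec hfreq v ε hε
  set ℓ := max (max L (n+1)) (⌈((n:ℝ)+1)/ε⌉₊ + 1) with hℓdef
  obtain ⟨hdiv, h1, hLl⟩ := const_div_le_of_big (by positivity : (0:ℝ) ≤ (n:ℝ)+1) hε (le_refl ℓ)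
  have hLℓ : L ≤ ℓ := le_trans (le_max_left _ _) hLl
  have hnℓ : n + 1 ≤ ℓ := le_trans (le_max_right _ _) hLl
  have hℓpos : (0:ℝ) < ℓ := by exact_mod_cast Nat.pos_of_ne_zero (by omega)
  set M := ℓ + 1 - n with hM
  have hMr : (M:ℝ) = (ℓ:ℝ) + 1 - n := by
    rw [hM]
    have : (n:ℕ) ≤ ℓ + 1 := by omega
    push_cast [Nat.cast_sub this]
    ring
  -- the Birkhoff sum function
  set P : ℕ → Set (ℕ → A) := fun j => (shiftMap^[j] : (ℕ → A) → (ℕ → A)) ⁻¹' cylG w v with hP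
  have hPmeas : ∀ j, MeasurableSet (P j) := fun j =>
    (measurable_shiftMap.iterate j) (measurableSet_cylG w v)
  set h : (ℕ → A) → ℝ := fun x => ∑ j ∈ Finset.range M,
    Set.indicator (P j) (fun _ => (1:ℝ)) x with hh
  have hint : ∀ j, MeasureTheory.Integrable (Set.indicator (P j) (fun _ => (1:ℝ))) ν :=
    fun j => (MeasureTheory.integrable_const (1:ℝ)).indicator (hPmeas j)
  have hhint : MeasureTheory.Integrable h ν := by
    rw [hh]
    exact MeasureTheory.integrable_finset_sum _ (fun j _ => hint j)
  have hkey : ∫ x, h x ∂ν = (M:ℝ) * c := by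
    rw [hh]
    rw [MeasureTheory.integral_finset_sum _ (fun j _ => hint j)]
    have : ∀ j ∈ Finset.range M, ∫ x, Set.indicator (P j) (fun _ => (1:ℝ)) x ∂ν = c := by
      intro j _
      rw [MeasureTheory.integral_indicator_const (1:ℝ) (hPmeas j)]
      unfold Measure.real
      rw [nu_iterate_preimage ν hinv j (measurableSet_cylG w v)]
      simp [hc]
    rw [Finset.sum_congr rfl this, Finset.sum_const, Finset.card_range]
    simp [nsmul_eq_mul]
  -- pointwise bounds on the closure
  have hpt : ∀ x, x ∈ closure {y : ℕ → A | ∃ k : ℕ, y = fun n => w (n + k)} →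
      (freq hfreq v - ε) * ℓ ≤ h x ∧ h x ≤ (freq hfreq v + ε) * ℓ := by
    intro x hx
    obtain ⟨k, hk⟩ := mem_closure_window w hx ℓ
    have hcount : h x = (countOcc w v k ℓ : ℝ) := by
      rw [hh]
      simp only []
      have : ∀ j, Set.indicator (P j) (fun _ => (1:ℝ)) x = if x ∈ P j then 1 else 0 := by
        intro j
        rw [Set.indicator_apply]
      rw [Finset.sum_congr rfl (fun j _ => this j)]
      rw [Finset.sum_boole]
      rw [countOcc_card, ← hn, ← hM]
      apply congrArg (fun m : ℕ => (m:ℝ))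
      apply congrArg Finset.card
      apply Finset.filter_congr
      intro j hj
      rw [Finset.mem_range] at hj
      have hjn : j + n ≤ ℓ := by omega
      simp only [hP, Set.mem_preimage]
      constructor
      · intro hmem i hi
        have := hmem i hi
        rw [shift_iterate_apply] at this
        rw [← hn] at hi
        rw [hk (i + j) (by omega)] at this
        rw [← this]
        congr 1
        omega
      · intro hocc i hi
        rw [shift_iterate_apply]
        rw [← hn] at hi
        rw [hk (i + j) (by omega)]
        rw [hocc i hi]
        congr 1
        omega
    have hspec := hL ℓ hLℓ k
    rw [abs_lt] at hspec
    rw [hcount]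
    constructor
    · have h1 : freq hfreq v - ε < (countOcc w v k ℓ : ℝ)/ℓ := by linarith [hspec.1]
      rw [lt_div_iff₀ hℓpos] at h1
      linarith
    · have h2 : (countOcc w v k ℓ : ℝ)/ℓ < freq hfreq v + ε := by linarith [hspec.2]
      rw [div_lt_iff₀ hℓpos] at h2
      linarith
  have hae : ∀ᵐ x ∂ν, x ∈ closure {y : ℕ → A | ∃ k : ℕ, y = fun n => w (n + k)} := by
    rw [MeasureTheory.ae_iff]
    exact hsupp
  have hup : ∫ x, h x ∂ν ≤ (freq hfreq v + ε) * ℓ := by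
    have := MeasureTheory.integral_mono_ae hhint (MeasureTheory.integrable_const _)
      (hae.mono fun x hx => (hpt x hx).2)
    rwa [MeasureTheory.integral_const, probReal_univ,
      one_smul] at this
  have hlo : (freq hfreq v - ε) * ℓ ≤ ∫ x, h x ∂ν := by
    have := MeasureTheory.integral_mono_ae (MeasureTheory.integrable_const _) hhint
      (hae.mono fun x hx => (hpt x hx).1)
    rwa [MeasureTheory.integral_const, probReal_univ,
      one_smul] at this
  rw [hkey] at hup hlo
  have hMcl : |(M:ℝ) * c / ℓ - freq hfreq v| ≤ ε := by
    rw [abs_le]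
    constructor
    · have h2 : freq hfreq v - ε ≤ (M:ℝ)*c/ℓ := by
        rw [le_div_iff₀ hℓpos]; linarith
      linarith
    · have h2 : (M:ℝ)*c/ℓ ≤ freq hfreq v + ε := by
        rw [div_le_iff₀ hℓpos]; linarith
      linarith
  have hcM : |c - (M:ℝ) * c / ℓ| ≤ ((n:ℝ)+1)/ℓ := by
    have heq : c - (M:ℝ) * c / ℓ = c * ((n:ℝ) - 1) / ℓ := by
      rw [hMr]
      field_simp
      ring
    rw [heq, abs_div, abs_of_pos hℓpos]
    have habs : |c * ((n:ℝ)-1)| ≤ (n:ℝ)+1 := by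
      rw [abs_mul, abs_of_nonneg hc0]
      have h1 : |(n:ℝ)-1| ≤ (n:ℝ)+1 := by
        rw [abs_le]
        have : (0:ℝ) ≤ (n:ℝ) := Nat.cast_nonneg n
        constructor <;> linarith
      calc c * |(n:ℝ)-1| ≤ 1 * ((n:ℝ)+1) :=
            mul_le_mul hc1 h1 (abs_nonneg _) zero_le_one
        _ = (n:ℝ)+1 := one_mul _
    gcongr
  calc |c - freq hfreq v|
      ≤ |c - (M:ℝ)*c/ℓ| + |(M:ℝ)*c/ℓ - freq hfreq v| := by
        have := abs_sub_le c ((M:ℝ)*c/ℓ) (freq hfreq v)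
        linarith
    _ ≤ ((n:ℝ)+1)/ℓ + ε := add_le_add hcM hMcl
    _ ≤ ε + ε := by linarith [hdiv]
    _ = ε' := by rw [hεdef]; ring

end Main


/-- If a sequence `w` over a finite alphabet has uniform word frequencies, then the
shift on the orbit closure `X_w` of `w` is uniquely ergodic: there is a unique
shift-invariant Borel probability measure concentrated on `X_w`. -/
theorem stmt6 {A : Type*} [Fintype A] [TopologicalSpace A] [DiscreteTopology A]
    [MeasurableSpace A] [MeasurableSingletonClass A]
    (w : ℕ → A) (hfreq : UniformWordFrequencies w) :
    ∃! μ : Measure (ℕ → A), IsProbabilityMeasure μ ∧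
      μ (closure {x | ∃ k : ℕ, x = fun n => w (n + k)})ᶜ = 0 ∧
      μ.map shiftMap = μ := by
  classical
  set f := freq hfreq with hf
  have hf0 : ∀ u, 0 ≤ f u := freq_nonneg hfreq
  have hfR : ∀ u : List A, ∑ a : A, f (u ++ [a]) = f u := fun u =>
    freq_sum_eq hfreq u (fun a => u ++ [a]) (fun k ℓ => sum_countOcc_append w u k ℓ)
  have hfL : ∀ u : List A, ∑ a : A, f (a :: u) = f u := fun u =>
    freq_sum_eq hfreq u (fun a => a :: u) (fun k ℓ => sum_countOcc_cons w u k ℓ)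
  have hfnil : f [] = 1 := freq_nil hfreq
  set μ := muW f (w 0) with hμ
  haveI hprob : IsProbabilityMeasure μ := muW_prob w f hf0 hfR hfnil
  have hcyl : ∀ v, μ (cylG w v) = ENNReal.ofReal (f v) := fun v =>
    muW_cylG w f hf0 hfR hfnil v
  have hsupp : μ (closure {x | ∃ k : ℕ, x = fun n => w (n + k)})ᶜ = 0 := by
    apply measure_mono_null (compl_closure_subset w)
    apply measure_iUnion_null
    intro v
    apply measure_iUnion_null
    intro hv
    rw [hcyl v, hf, freq_zero_of_not_occur hfreq v hv]
    simp
  have hinv : μ.map shiftMap = μ := by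
    haveI : IsProbabilityMeasure (μ.map shiftMap) :=
      Measure.isProbabilityMeasure_map measurable_shiftMap.aemeasurable
    apply measure_ext_cylG w
    intro v
    rw [Measure.map_apply measurable_shiftMap (measurableSet_cylG w v),
      shift_preimage_cylG w v]
    have hd : Pairwise (Function.onFun Disjoint fun a : A => cylG w (a :: v)) := by
      intro a b hab
      rw [Function.onFun, Set.disjoint_left]
      intro x hxa hxb
      have h1 := hxa 0 (by simp)
      have h2 := hxb 0 (by simp)
      rw [List.getD_cons_zero] at h1 h2
      exact hab (h1.symm.trans h2)
    rw [measure_iUnion hd (fun a => measurableSet_cylG w _)]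
    rw [tsum_fintype]
    calc ∑ a : A, μ (cylG w (a :: v)) = ∑ a : A, ENNReal.ofReal (f (a :: v)) := by
          apply Finset.sum_congr rfl
          intro a _
          exact hcyl _
      _ = ENNReal.ofReal (∑ a : A, f (a :: v)) :=
          (ENNReal.ofReal_sum_of_nonneg (fun a _ => hf0 _)).symm
      _ = ENNReal.ofReal (f v) := by rw [hfL]
      _ = μ (cylG w v) := (hcyl v).symm
  refine ⟨μ, ⟨hprob, hsupp, hinv⟩, ?_⟩
  rintro ν ⟨hν1, hν2, hν3⟩
  haveI := hν1
  apply measure_ext_cylG w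
  intro v
  rw [nu_cylG w hfreq ν hν2 hν3 v, hcyl v]
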